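/- Let w ∈ ℕ, h > 0, β > 0, α ≤ β/(β+h), and sorted sequences a, b : {1,…,w} → [0,h] with ∑a = ∑b. If a_{⌈αw⌉} ≥ b_{w−⌈αw⌉+1} + β, then w·β ≤ (β+h)·(⌈αw⌉−1), which contradicts ⌈αw⌉−1 < αw and α ≤ β/(β+h). Hence a_{⌈αw⌉} < b_{w−⌈αw⌉+1} + β. -/

import Mathlib

/-- Core counting inequality: for ascending sequences `a, b : {1,…,w} → [0,h]` with equal sums
and `α ≤ β/(β+h)`, assuming `a_{⌈αw⌉} ≥ b_{w-⌈αw⌉+1} + β` leads to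
`w·β ≤ (β+h)·(⌈αw⌉-1)`, contradicting `⌈αw⌉-1 < αw` and `α ≤ β/(β+h)`.
Hence `a_{⌈αw⌉} < b_{w-⌈αw⌉+1} + β`. -/
theorem container_counting (w : ℕ) (hw : 1 ≤ w) (h β α : ℝ)
    (hh : 0 < h) (hβ : 0 < β) (hα0 : 0 < α) (hαβ : α ≤ β / (β + h))
    (a b : ℕ → ℝ)
    (haI : ∀ i, 1 ≤ i → i ≤ w → a i ∈ Set.Icc 0 h)
    (hbI : ∀ i, 1 ≤ i → i ≤ w → b i ∈ Set.Icc 0 h)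
    (hamono : ∀ i j, 1 ≤ i → i ≤ j → j ≤ w → a i ≤ a j)
    (hbmono : ∀ i j, 1 ≤ i → i ≤ j → j ≤ w → b i ≤ b j)
    (hsum : ∑ i ∈ Finset.Icc 1 w, a i = ∑ i ∈ Finset.Icc 1 w, b i) :
    a ⌈α * (w : ℝ)⌉₊ < b (w - ⌈α * (w : ℝ)⌉₊ + 1) + β := by
  by_contra hcon
  push_neg at hcon
  set k := ⌈α * (w : ℝ)⌉₊ with hk
  have hβh : 0 < β + h := by linarith
  have hα1 : α < 1 := lt_of_le_of_lt hαβ (by rw [div_lt_one hβh]; linarith)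
  have hwpos : (0 : ℝ) < (w : ℝ) := by exact_mod_cast hw
  have hk1 : 1 ≤ k := Nat.one_le_iff_ne_zero.mpr (by
    simp only [hk, ne_eq, Nat.ceil_eq_zero, not_le]
    positivity)
  have hkw : k ≤ w := by
    rw [hk]
    exact Nat.ceil_le.mpr (by nlinarith)
  set m := w - k + 1 with hm
  have hm1 : 1 ≤ m := by omega
  have hmw : m ≤ w := by omega
  have hmcast : (m : ℝ) = (w : ℝ) - (k : ℝ) + 1 := by
    rw [hm]; push_cast [Nat.cast_sub hkw]; ring
  -- lower bound for sum of a
  have hla : (m : ℝ) * a k ≤ ∑ i ∈ Finset.Icc 1 w, a i := by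
    have h1 : (m : ℝ) * a k ≤ ∑ i ∈ Finset.Icc k w, a i := by
      have := Finset.card_nsmul_le_sum (Finset.Icc k w) a (a k)
        (fun i hi => by
          rw [Finset.mem_Icc] at hi
          exact hamono k i hk1 hi.1 hi.2)
      rw [Nat.card_Icc, nsmul_eq_mul] at this
      have he : w + 1 - k = m := by omega
      rwa [he] at this
    refine le_trans h1 (Finset.sum_le_sum_of_subset_of_nonneg ?_ ?_)
    · intro i hi
      rw [Finset.mem_Icc] at *
      omega
    · intro i hi _
      rw [Finset.mem_Icc] at hi
      exact (haI i hi.1 hi.2).1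
  -- upper bound for sum of b
  have hub : ∑ i ∈ Finset.Icc 1 w, b i ≤ (m : ℝ) * b m + ((k : ℝ) - 1) * h := by
    have hsplit : ∑ i ∈ Finset.Ioc 0 m, b i + ∑ i ∈ Finset.Ioc m w, b i
        = ∑ i ∈ Finset.Ioc 0 w, b i :=
      Finset.sum_Ioc_consecutive b (Nat.zero_le m) hmw
    have h1 : ∑ i ∈ Finset.Ioc 0 m, b i ≤ (m : ℝ) * b m := by
      have := Finset.sum_le_card_nsmul (Finset.Ioc 0 m) b (b m)
        (fun i hi => by
          rw [Finset.mem_Ioc] at hi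
          exact hbmono i m hi.1 hi.2 hmw)
      rwa [Nat.card_Ioc, nsmul_eq_mul, Nat.sub_zero] at this
    have h2 : ∑ i ∈ Finset.Ioc m w, b i ≤ ((k : ℝ) - 1) * h := by
      have := Finset.sum_le_card_nsmul (Finset.Ioc m w) b h
        (fun i hi => by
          rw [Finset.mem_Ioc] at hi
          exact (hbI i (by omega) hi.2).2)
      rw [Nat.card_Ioc, nsmul_eq_mul] at this
      have hwm : w - m = k - 1 := by omega
      rw [hwm] at this
      calc ∑ i ∈ Finset.Ioc m w, b i ≤ ((k - 1 : ℕ) : ℝ) * h := this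
        _ = ((k : ℝ) - 1) * h := by rw [Nat.cast_sub hk1]; push_cast; ring
    calc ∑ i ∈ Finset.Icc 1 w, b i = ∑ i ∈ Finset.Ioc 0 w, b i := by
          rw [← Finset.Icc_add_one_left_eq_Ioc, zero_add]
      _ = ∑ i ∈ Finset.Ioc 0 m, b i + ∑ i ∈ Finset.Ioc m w, b i := hsplit.symm
      _ ≤ (m : ℝ) * b m + ((k : ℝ) - 1) * h := by linarith
  -- combine
  have hkey : (m : ℝ) * a k ≤ (m : ℝ) * b m + ((k : ℝ) - 1) * h := by
    rw [hsum] at hla; linarith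
  have hmpos : (0 : ℝ) < (m : ℝ) := by exact_mod_cast hm1
  -- m * β ≤ (k-1) * h
  have hmb : (m : ℝ) * β ≤ ((k : ℝ) - 1) * h := by nlinarith
  -- k - 1 < α * w
  have hkc : (k : ℝ) - 1 < α * w := by
    have := Nat.ceil_lt_add_one (le_of_lt (by positivity : (0:ℝ) < α * w))
    rw [← hk] at this
    linarith
  have hαβ' : α * (β + h) ≤ β := (le_div_iff₀ hβh).mp hαβ
  -- final contradiction: w*β ≤ (k-1)*(β+h) < α*w*(β+h) ≤ β*w
  rw [hmcast] at hmb
  nlinarith
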